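/- For p, q > 1 and x ∈ (0,1), one has arsinh_{p,q}(x) < (x^p/(1+x^q))^{1/p} · (1 - x^q/(1+x^q))^{-q/(p(q+1))}. -/

import Mathlib

open Real Set

noncomputable def arsinhpq (p q x : ℝ) : ℝ :=
  ∫ t in (0:ℝ)..x, (1 + t ^ q) ^ (-1/p)

theorem stmt3 (p q x : ℝ) (hp : 1 < p) (hq : 1 < q) (hx : x ∈ Ioo (0:ℝ) 1) :
    arsinhpq p q x < (x ^ p / (1 + x ^ q)) ^ (1/p) *
      (1 - x ^ q / (1 + x ^ q)) ^ (-(q / (p * (q + 1)))) := by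
  obtain ⟨hx0, hx1⟩ := hx
  have hp0 : (0:ℝ) < p := by linarith
  have hq0 : (0:ℝ) < q := by linarith
  have hq1 : (0:ℝ) < q + 1 := by linarith
  have hpq : (0:ℝ) < p * (q + 1) := by positivity
  set γ : ℝ := 1 / (p * (q + 1)) with hγ
  set β : ℝ := q / (p * (q + 1)) with hβ
  have hγ0 : 0 < γ := by positivity
  have hβ0 : 0 < β := by positivity
  have hβ1 : β < 1 := by
    rw [hβ, div_lt_one hpq]
    nlinarith
  have hβγ : β = γ * q := by rw [hβ, hγ]; ring
  have hγβp : γ + β = 1 / p := by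
    rw [hγ, hβ]; field_simp; ring
  -- positivity of 1 + t^q for t ≥ 0
  have hu_pos : ∀ t : ℝ, 0 ≤ t → (0:ℝ) < 1 + t ^ q := by
    intro t ht
    have : (0:ℝ) ≤ t ^ q := Real.rpow_nonneg ht q
    linarith
  -- the comparison function and its derivative
  set G : ℝ → ℝ := fun t => t * (1 + t ^ q) ^ (-γ) with hG
  set G' : ℝ → ℝ := fun t =>
    (1 + t ^ q) ^ (-γ) + t * (q * t ^ (q - 1) * -γ * (1 + t ^ q) ^ (-γ - 1)) with hG'
  have hderiv : ∀ t ∈ Set.uIcc (0:ℝ) x, HasDerivAt G (G' t) t := by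
    intro t ht
    rw [Set.uIcc_of_le hx0.le] at ht
    have htq : HasDerivAt (fun s : ℝ => s ^ q) (q * t ^ (q - 1)) t :=
      Real.hasDerivAt_rpow_const (Or.inr hq.le)
    have hinner : HasDerivAt (fun s : ℝ => 1 + s ^ q) (q * t ^ (q - 1)) t :=
      htq.const_add 1
    have hne : (1 : ℝ) + t ^ q ≠ 0 := (hu_pos t ht.1).ne'
    have hpow : HasDerivAt (fun s : ℝ => (1 + s ^ q) ^ (-γ))
        (q * t ^ (q - 1) * -γ * (1 + t ^ q) ^ (-γ - 1)) t :=
      hinner.rpow_const (Or.inl hne)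
    have := (hasDerivAt_id t).mul hpow
    simpa [hG, hG', one_mul, Pi.mul_def] using this
  -- continuity
  have hcont_tq : Continuous (fun t : ℝ => t ^ q) := Real.continuous_rpow_const hq0.le
  have hcont_tq1 : Continuous (fun t : ℝ => t ^ (q - 1)) :=
    Real.continuous_rpow_const (by linarith)
  have hcont_inner : Continuous (fun t : ℝ => 1 + t ^ q) := continuous_const.add hcont_tq
  have hcontF : ContinuousOn (fun t : ℝ => (1 + t ^ q) ^ (-1/p)) (Icc 0 x) := by
    apply ContinuousOn.rpow_const hcont_inner.continuousOn
    intro t ht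
    exact Or.inl (hu_pos t ht.1).ne'
  have hcontG' : ContinuousOn G' (Icc 0 x) := by
    apply ContinuousOn.add
    · apply ContinuousOn.rpow_const hcont_inner.continuousOn
      intro t ht; exact Or.inl (hu_pos t ht.1).ne'
    · apply ContinuousOn.mul continuousOn_id
      apply ContinuousOn.mul
      · exact ((continuous_const.mul hcont_tq1).mul continuous_const).continuousOn
      · apply ContinuousOn.rpow_const hcont_inner.continuousOn
        intro t ht; exact Or.inl (hu_pos t ht.1).ne'
  -- pointwise strict inequality on (0, x]
  have hpoint : ∀ t ∈ Ioc (0:ℝ) x, (1 + t ^ q) ^ (-1/p) < G' t := by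
    intro t ht
    have ht0 : 0 < t := ht.1
    set u : ℝ := 1 + t ^ q with hu
    have htq0 : (0:ℝ) < t ^ q := Real.rpow_pos_of_pos ht0 q
    have hu1 : 1 < u := by rw [hu]; linarith
    have hu0 : (0:ℝ) < u := by linarith
    -- Bernoulli: (u⁻¹)^β < 1 + β * (u⁻¹ - 1)
    have hui0 : (0:ℝ) < u⁻¹ := inv_pos.mpr hu0
    have hui1 : u⁻¹ < 1 := inv_lt_one_of_one_lt₀ hu1
    have hkey : u ^ (-β) < 1 + β * (u⁻¹ - 1) := by
      have := rpow_one_add_lt_one_add_mul_self (s := u⁻¹ - 1) (by linarith)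
        (sub_ne_zero.mpr hui1.ne) hβ0 hβ1
      have h1 : (1 : ℝ) + (u⁻¹ - 1) = u⁻¹ := by ring
      rw [h1] at this
      rwa [Real.rpow_neg hu0.le, ← Real.inv_rpow hu0.le]
    -- rewrite G' t
    have httq : t * t ^ (q - 1) = t ^ q := by
      nth_rewrite 1 [← Real.rpow_one t]
      rw [← Real.rpow_add ht0]
      norm_num
    have htq_eq : t ^ q = u - 1 := by rw [hu]; ring
    have hG'eq : G' t = u ^ (-γ) * (1 + β * (u⁻¹ - 1)) := by
      have h1 : u ^ (-γ - 1) = u ^ (-γ) * u⁻¹ := by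
        rw [show -γ - 1 = -γ + (-1) by ring, Real.rpow_add hu0, Real.rpow_neg_one]
      have h2 : t * (q * t ^ (q - 1) * -γ * u ^ (-γ - 1))
          = (t * t ^ (q - 1)) * (q * -γ * u ^ (-γ - 1)) := by ring
      rw [hG']
      simp only [← hu]
      rw [h2, httq, htq_eq, h1, hβγ]
      have hne : u ≠ 0 := hu0.ne'
      field_simp
      ring_nf
    have hfeq : u ^ (-1/p) = u ^ (-γ) * u ^ (-β) := by
      rw [← Real.rpow_add hu0]
      congr 1
      rw [neg_div, ← hγβp]; ring
    rw [hG'eq]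
    calc (1 + t ^ q) ^ (-1/p) = u ^ (-γ) * u ^ (-β) := by rw [← hu, hfeq]
      _ < u ^ (-γ) * (1 + β * (u⁻¹ - 1)) :=
        mul_lt_mul_of_pos_left hkey (Real.rpow_pos_of_pos hu0 _)
  -- strict integral inequality
  have hlt : arsinhpq p q x < ∫ t in (0:ℝ)..x, G' t := by
    apply intervalIntegral.integral_lt_integral_of_continuousOn_of_le_of_exists_lt hx0
      hcontF hcontG' (fun t ht => (hpoint t ht).le)
    exact ⟨x, ⟨hx0.le, le_rfl⟩, hpoint x ⟨hx0, le_rfl⟩⟩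
  -- FTC
  have hint : ∫ t in (0:ℝ)..x, G' t = x * (1 + x ^ q) ^ (-γ) := by
    rw [intervalIntegral.integral_eq_sub_of_hasDerivAt hderiv
      (hcontG'.intervalIntegrable_of_Icc hx0.le)]
    simp [hG]
  -- RHS computation
  have hxq0 : (0:ℝ) < x ^ q := Real.rpow_pos_of_pos hx0 q
  have hu0 : (0:ℝ) < 1 + x ^ q := hu_pos x hx0.le
  have hRHS : (x ^ p / (1 + x ^ q)) ^ (1/p) *
      (1 - x ^ q / (1 + x ^ q)) ^ (-(q / (p * (q + 1)))) = x * (1 + x ^ q) ^ (-γ) := by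
    have h1 : 1 - x ^ q / (1 + x ^ q) = (1 + x ^ q)⁻¹ := by field_simp; ring
    have h2 : ((1 + x ^ q)⁻¹ : ℝ) ^ (-β) = (1 + x ^ q) ^ β := by
      rw [Real.inv_rpow hu0.le, ← Real.rpow_neg hu0.le, neg_neg]
    have h3 : (x ^ p / (1 + x ^ q)) ^ (1/p) = x * (1 + x ^ q) ^ (-(1/p)) := by
      rw [Real.div_rpow (Real.rpow_nonneg hx0.le p) hu0.le, one_div,
        Real.rpow_rpow_inv hx0.le hp0.ne', Real.rpow_neg hu0.le, div_eq_mul_inv, ← one_div]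
    rw [h1, ← hβ, h2, h3, mul_assoc, ← Real.rpow_add hu0]
    congr 1
    rw [← hγβp]; ring
  rw [hRHS, ← hint]
  exact hlt
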